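/- Let k be a field of characteristic ≠ 2, let A ∈ 𝒞(k), and let ℓ ⊆ A be a Kleinian subfield of A (so ℓ is a quadratic field extension of k). Then there exists an ℓ-admissible triple c ∈ k³ and a k-algebra isomorphism A(ℓ, c) → A. -/

import Mathlib

open Module Function

variable {k ℓ : Type}

section Helpers
variable [Field k] [Field ℓ] [Algebra k ℓ]

lemma pair_indep (x : ℓ) (hxk : ∀ c : k, x ≠ algebraMap k ℓ c) :
    LinearIndependent k ![(1 : ℓ), x] := by
  rw [LinearIndependent.pair_iff]
  intro s t h
  by_cases ht : t = 0
  · subst ht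
    simp only [zero_smul, add_zero] at h
    rcases smul_eq_zero.mp h with h' | h'
    · exact ⟨h', rfl⟩
    · exact absurd h' one_ne_zero
  · exfalso
    apply hxk (-(t⁻¹ * s))
    have h1 : t • x = -(s • (1 : ℓ)) := by
      rw [eq_neg_iff_add_eq_zero, add_comm]; exact h
    rw [Algebra.algebraMap_eq_smul_one, neg_smul]
    have h2 := congrArg (fun w => t⁻¹ • w) h1
    simp only [smul_smul, inv_mul_cancel₀ ht, one_smul, smul_neg] at h2
    exact h2

noncomputable def pairBasis (hquad : finrank k ℓ = 2) (x : ℓ)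
    (hxk : ∀ c : k, x ≠ algebraMap k ℓ c) : Basis (Fin 2) k ℓ :=
  basisOfLinearIndependentOfCardEqFinrank (pair_indep x hxk) (by simp [hquad])

lemma ext_pair (hquad : finrank k ℓ = 2) (x : ℓ) (hxk : ∀ c : k, x ≠ algebraMap k ℓ c)
    {f g : ℓ →ₗ[k] ℓ} (h1 : f 1 = g 1) (hx : f x = g x) : f = g := by
  apply Basis.ext (pairBasis hquad x hxk)
  intro i
  have hb : ⇑(pairBasis hquad x hxk) = ![(1 : ℓ), x] :=
    coe_basisOfLinearIndependentOfCardEqFinrank _ _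
  fin_cases i <;> simp [hb, h1, hx]

lemma fixed_mem_range (hquad : finrank k ℓ = 2) (σ : ℓ ≃ₐ[k] ℓ) (hσ : ∃ x : ℓ, σ x ≠ x)
    {a : ℓ} (ha : σ a = a) : ∃ c : k, a = algebraMap k ℓ c := by
  by_contra hc
  push_neg at hc
  obtain ⟨x, hx⟩ := hσ
  apply hx
  have heq : σ.toLinearMap = LinearMap.id :=
    ext_pair hquad a hc (by simp) (by simpa using ha)
  simpa using LinearMap.congr_fun heq x

lemma aut_eq_sigma (hquad : finrank k ℓ = 2) (σ : ℓ ≃ₐ[k] ℓ) (hσ : ∃ x : ℓ, σ x ≠ x)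
    (τ : ℓ →ₗ[k] ℓ) (hmul : ∀ x y : ℓ, τ (x * y) = τ x * τ y) (h1 : τ 1 = 1)
    (hne : ∃ x, τ x ≠ x) : ∀ w, τ w = σ w := by
  obtain ⟨x, hx⟩ := hne
  have hxk : ∀ c : k, x ≠ algebraMap k ℓ c := by
    intro c hc
    apply hx
    rw [hc, Algebra.algebraMap_eq_smul_one, map_smul, h1]
  have hσx : σ x ≠ x := by
    intro hsx
    obtain ⟨y, hy⟩ := hσ
    apply hy
    have heq : σ.toLinearMap = LinearMap.id :=
      ext_pair hquad x hxk (by simp) (by simpa using hsx)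
    simpa using LinearMap.congr_fun heq y
  set b := pairBasis hquad x hxk with hbdef
  have hb : ⇑b = ![(1 : ℓ), x] := coe_basisOfLinearIndependentOfCardEqFinrank _ _
  set P := algebraMap k ℓ (b.repr (x * x) 0) with hP
  set Q := algebraMap k ℓ (b.repr (x * x) 1) with hQ
  have hxx : x * x = P + Q * x := by
    conv_lhs => rw [← Basis.sum_repr b (x * x)]
    rw [Fin.sum_univ_two, hb]
    simp [hP, hQ, Algebra.smul_def]
  have hτxeq : τ x = Q - x := by
    have hτxx : τ x * τ x = P + Q * τ x := by
      have := hmul x x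
      rw [hxx] at this
      rw [← this, map_add, hP, hQ]
      rw [show τ (algebraMap k ℓ ((b.repr (x*x)) 0)) = algebraMap k ℓ ((b.repr (x*x)) 0) by
        rw [Algebra.algebraMap_eq_smul_one, map_smul, h1]]
      rw [show algebraMap k ℓ ((b.repr (x*x)) 1) * x = ((b.repr (x*x)) 1) • x by
        rw [Algebra.smul_def], map_smul, Algebra.smul_def]
    have hfac : (τ x - x) * (τ x + x - Q) = 0 := by linear_combination hτxx - hxx
    rcases mul_eq_zero.mp hfac with h | h
    · exact absurd (sub_eq_zero.mp h) hx
    · linear_combination h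
  have hσxeq : σ x = Q - x := by
    have hσxx : σ x * σ x = P + Q * σ x := by
      have := congrArg σ hxx
      rw [map_mul, map_add, map_mul] at this
      rw [this, hP, hQ, AlgEquiv.commutes, AlgEquiv.commutes]
    have hfac : (σ x - x) * (σ x + x - Q) = 0 := by linear_combination hσxx - hxx
    rcases mul_eq_zero.mp hfac with h | h
    · exact absurd (sub_eq_zero.mp h) hσx
    · linear_combination h
  have heq : τ = σ.toLinearMap :=
    ext_pair hquad x hxk (by simp [h1]) (by simp [hτxeq, hσxeq])
  intro w
  simpa using LinearMap.congr_fun heq w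

lemma comm_sigma_form (hquad : finrank k ℓ = 2) (σ : ℓ ≃ₐ[k] ℓ) (hσ : ∃ x : ℓ, σ x ≠ x)
    (hinv : ∀ w : ℓ, σ (σ w) = w) (f : ℓ →ₗ[k] ℓ) (hcomm : ∀ w, f (σ w) = σ (f w)) :
    ∃ a b : k, ∀ w, f w = algebraMap k ℓ a * w + algebraMap k ℓ b * σ w := by
  obtain ⟨x, hx⟩ := hσ
  have hxk : ∀ c : k, x ≠ algebraMap k ℓ c := by
    intro c hc
    exact hx (by rw [hc, AlgEquiv.commutes])
  have hd : x - σ x ≠ 0 := sub_ne_zero.mpr (Ne.symm hx)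
  set A' := (f x - f 1 * σ x) / (x - σ x) with hA
  set B' := f 1 - A' with hB
  have hgex : ∃ g : ℓ →ₗ[k] ℓ, ∀ w, g w = A' * w + B' * σ w := by
    refine ⟨{ toFun := fun w => A' * w + B' * σ w,
              map_add' := ?_, map_smul' := ?_ }, fun w => rfl⟩
    · intro u v; rw [map_add]; ring
    · intro c u; rw [map_smul]
      simp only [RingHom.id_apply, smul_add, mul_smul_comm]
  obtain ⟨g, hgdef⟩ := hgex
  have hAx : A' * (x - σ x) = f x - f 1 * σ x := div_mul_cancel₀ _ hd
  have hfg : f = g := by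
    apply ext_pair hquad x hxk
    · rw [hgdef]; simp only [map_one, mul_one]; rw [hB]; ring
    · rw [hgdef, hB]; linear_combination -hAx
  have e1 : A' + B' = σ A' + σ B' := by
    have h := hcomm 1
    rw [map_one] at h
    rw [hfg, hgdef] at h
    simpa [map_one, map_add, map_mul] using h
  have e2 : A' * σ x + B' * x = σ A' * σ x + σ B' * x := by
    have h := hcomm x
    rw [hfg, hgdef (σ x), hgdef x] at h
    rw [hinv] at h
    rw [map_add, map_mul, map_mul, hinv] at h
    exact h
  have hsA : σ A' = A' := by
    have hs : (A' - σ A') * (σ x - x) = 0 := by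
      have ht : B' - σ B' = -(A' - σ A') := by linear_combination e1
      linear_combination e2 - x * ht
    rcases mul_eq_zero.mp hs with h | h
    · linear_combination -h
    · exact absurd h (by intro hh; exact hd (by linear_combination -hh))
  have hsB : σ B' = B' := by linear_combination -e1 - hsA
  obtain ⟨a, ha⟩ := fixed_mem_range hquad σ ⟨x, hx⟩ hsA
  obtain ⟨b, hb⟩ := fixed_mem_range hquad σ ⟨x, hx⟩ hsB
  exact ⟨a, b, fun w => by rw [hfg, hgdef, ha, hb]⟩

end Helpers

/-- The function `q_c : ℓ × ℓ → ℓ` associated with a triple `c = (c₁, c₂, c₃) ∈ k³`. -/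
def qc [Field k] [Field ℓ] [Algebra k ℓ] (σ : ℓ ≃ₐ[k] ℓ) (c : k × k × k) (x y : ℓ) : ℓ :=
  (1 - algebraMap k ℓ c.1) * x ^ 2 + algebraMap k ℓ c.1 * (x * σ x)
    - algebraMap k ℓ c.2.1 * y ^ 2 - algebraMap k ℓ c.2.2 * (y * σ y)

/-- A triple `c ∈ k³` is `ℓ`-admissible if `q_c` is anisotropic. -/
def IsAdmissibleTriple [Field k] [Field ℓ] [Algebra k ℓ] (σ : ℓ ≃ₐ[k] ℓ)
    (c : k × k × k) : Prop :=
  ∀ x y : ℓ, qc σ c x y = 0 → x = 0 ∧ y = 0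

/-- The multiplication of the 4-dimensional `k`-algebra `A(ℓ, c)` on `ℓ × ℓ`. -/
def Amul [Field k] [Field ℓ] [Algebra k ℓ] (σ : ℓ ≃ₐ[k] ℓ) (c : k × k × k)
    (p q : ℓ × ℓ) : ℓ × ℓ :=
  (p.1 * q.1 + (algebraMap k ℓ c.2.1 * p.2 + algebraMap k ℓ c.2.2 * σ p.2) * q.2,
   p.2 * q.1 + ((1 - algebraMap k ℓ c.1) * p.1 + algebraMap k ℓ c.1 * σ p.1) * q.2)

/-- A Kleinian pair for a nonassociative `k`-algebra `(A, mul)`: a pair of distinct commuting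
automorphisms, each of order 2. -/
def IsKleinPair [Field k] {A : Type} [AddCommGroup A] [Module k A]
    (mul : A →ₗ[k] A →ₗ[k] A) (α β : A ≃ₗ[k] A) : Prop :=
  (∀ x y : A, α (mul x y) = mul (α x) (α y)) ∧
  (∀ x y : A, β (mul x y) = mul (β x) (β y)) ∧
  (∀ x : A, α (α x) = x) ∧ (∀ x : A, β (β x) = x) ∧
  (∀ x : A, α (β x) = β (α x)) ∧
  α ≠ LinearEquiv.refl k A ∧ β ≠ LinearEquiv.refl k A ∧ α ≠ β

/-- The right nucleus `N_r(A) = {z | (x·y)·z = x·(y·z) ∀ x y}`. -/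
def rightNucleusSet [Field k] {A : Type} [AddCommGroup A] [Module k A]
    (mul : A →ₗ[k] A →ₗ[k] A) : Set A :=
  {z | ∀ x y : A, mul (mul x y) z = mul x (mul y z)}

/-- Let `k` be a field of characteristic ≠ 2, `A ∈ 𝒞(k)`, and let `ℓ ⊆ A` be
a Kleinian subfield of `A` (so `ℓ` is a quadratic field extension of `k`, here embedded into
`A` by an injective `k`-linear multiplicative unital map `ι` whose range lies in the right
nucleus and equals `E_β(1)` for some Kleinian pair `(α, β)`). Then there exists an
`ℓ`-admissible triple `c ∈ k³` and a `k`-algebra isomorphism `A(ℓ, c) → A`. -/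
theorem exists_admissible_iso [Field k] [Field ℓ] [Algebra k ℓ]
    (hchar : (2 : k) ≠ 0) (hquad : finrank k ℓ = 2)
    (σ : ℓ ≃ₐ[k] ℓ) (hσ : ∃ x : ℓ, σ x ≠ x)
    (A : Type) [AddCommGroup A] [Module k A] [FiniteDimensional k A]
    (mul : A →ₗ[k] A →ₗ[k] A) (one : A)
    (h4 : finrank k A = 4)
    (hone : ∀ x : A, mul one x = x ∧ mul x one = x)
    (hdiv : ∀ a : A, a ≠ 0 →
      Function.Bijective (fun x => mul a x) ∧ Function.Bijective (fun x => mul x a))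
    (hproper : Set.range (fun s : k => s • one) ⊂ rightNucleusSet mul)
    (ι : ℓ →ₗ[k] A) (hinj : Function.Injective ι) (hι1 : ι 1 = one)
    (hιmul : ∀ x y : ℓ, ι (x * y) = mul (ι x) (ι y))
    (hnr : Set.range ι ⊆ rightNucleusSet mul)
    (hfix : ∃ α β : A ≃ₗ[k] A, IsKleinPair mul α β ∧ Set.range ι = {x : A | β x = x}) :
    ∃ c : k × k × k, IsAdmissibleTriple σ c ∧
      ∃ φ : ℓ × ℓ → A, Function.Bijective φ ∧
        (∀ p q : ℓ × ℓ, φ (p + q) = φ p + φ q) ∧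
        (∀ (t : k) (p : ℓ × ℓ), φ (t • p) = t • φ p) ∧
        (∀ p q : ℓ × ℓ, φ (Amul σ c p q) = mul (φ p) (φ q)) := by
  obtain ⟨α, β, hKP, hrange⟩ := hfix
  obtain ⟨hαm, hβm, hα2, hβ2, hαβ, hαne, hβne, hαβne⟩ := hKP
  have hnrt : ∀ (t : ℓ) (x y : A), mul (mul x y) (ι t) = mul x (mul y (ι t)) :=
    fun t x y => hnr ⟨t, rfl⟩ x y
  haveI : FiniteDimensional k ℓ := FiniteDimensional.of_finrank_pos (by rw [hquad]; norm_num)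
  have hone0 : one ≠ 0 := by
    intro h
    have : Nontrivial A := Module.nontrivial_of_finrank_pos (R := k) (by rw [h4]; norm_num)
    obtain ⟨x, hx0⟩ := exists_ne (0 : A)
    apply hx0
    calc x = mul one x := (hone x).1.symm
    _ = mul 0 x := by rw [h]
    _ = 0 := by rw [map_zero, LinearMap.zero_apply]
  have hβι : ∀ y : ℓ, β (ι y) = ι y := fun y => by
    have h : ι y ∈ Set.range ι := ⟨y, rfl⟩
    rw [hrange] at h; exact h
  have hfixmem : ∀ a : A, β a = a → ∃ y : ℓ, ι y = a := fun a ha => by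
    have h : a ∈ {x : A | β x = x} := ha
    rw [← hrange] at h; exact h
  have h2smul : ∀ a : A, a + a = 0 → a = 0 := fun a ha => by
    have h : (2 : k) • a = 0 := by rw [two_smul]; exact ha
    rcases smul_eq_zero.mp h with h' | h'
    · exact absurd h' hchar
    · exact h'
  have hαone : α one = one := by
    have hαone0 : α one ≠ 0 := fun h => hone0 (α.injective (by rw [h, map_zero]))
    have h1 : mul (α one) (α one) = mul (α one) one := by
      rw [(hone (α one)).2, ← hαm, (hone one).1]
    exact (hdiv (α one) hαone0).1.injective h1
  -- submodules
  set Epos : Submodule k A := LinearMap.range ι with hEposdef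
  have hEposrank : finrank k Epos = 2 := by
    rw [hEposdef, LinearMap.finrank_range_of_inj hinj, hquad]
  set Eneg : Submodule k A :=
    { carrier := {x | β x = -x}
      add_mem' := fun {a b} ha hb => by
        simp only [Set.mem_setOf_eq] at *
        rw [map_add, ha, hb, neg_add]
      zero_mem' := by simp
      smul_mem' := fun c a ha => by
        simp only [Set.mem_setOf_eq] at *
        rw [map_smul, ha, smul_neg] } with hEnegdef
  have hEneg_mem : ∀ a : A, a ∈ Eneg ↔ β a = -a := fun _ => Iff.rfl
  have hinf : Epos ⊓ Eneg = ⊥ := by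
    rw [eq_bot_iff]
    rintro x ⟨h1, h2⟩
    obtain ⟨y, hy⟩ := h1
    have hbx : β x = x := by rw [← hy, hβι]
    have hxx : x = -x := hbx.symm.trans (h2 : β x = -x)
    have : x + x = 0 := by nth_rewrite 2 [hxx]; simp
    simpa using h2smul x this
  have hsup : Epos ⊔ Eneg = ⊤ := by
    rw [eq_top_iff]
    intro x _
    have hxp : (2 : k)⁻¹ • (x + β x) ∈ Epos := by
      have hfx : β ((2 : k)⁻¹ • (x + β x)) = (2 : k)⁻¹ • (x + β x) := by
        rw [map_smul, map_add, hβ2, add_comm]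
      obtain ⟨y, hy⟩ := hfixmem _ hfx
      exact ⟨y, hy⟩
    have hxm : (2 : k)⁻¹ • (x - β x) ∈ Eneg := by
      rw [hEneg_mem, map_smul, map_sub, hβ2, ← smul_neg, neg_sub]
    have hxsum : (2 : k)⁻¹ • (x + β x) + (2 : k)⁻¹ • (x - β x) = x := by
      rw [← smul_add]
      have h : (x + β x) + (x - β x) = (2 : k) • x := by rw [two_smul]; abel
      rw [h, smul_smul, inv_mul_cancel₀ hchar, one_smul]
    exact hxsum ▸ Submodule.add_mem_sup hxp hxm
  have hEnegrank : finrank k Eneg = 2 := by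
    have h := Submodule.finrank_sup_add_finrank_inf_eq Epos Eneg
    rw [hsup, hinf, finrank_top, h4, hEposrank, finrank_bot] at h
    omega
  -- choice of v
  have hαneg : ∀ a : A, β a = -a → β (α a) = -(α a) := fun a ha => by
    rw [← hαβ, ha, map_neg]
  obtain ⟨v, hvβ, hv0, hvα⟩ : ∃ v : A, β v = -v ∧ v ≠ 0 ∧ (α v = v ∨ α v = -v) := by
    have : Nontrivial Eneg := by
      apply Module.nontrivial_of_finrank_pos (R := k)
      rw [hEnegrank]; norm_num
    obtain ⟨u', hu'⟩ := exists_ne (0 : Eneg)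
    set u : A := (u' : A) with hudef
    have huβ : β u = -u := u'.2
    have hu0 : u ≠ 0 := fun h => hu' (Subtype.ext h)
    by_cases hw : u + α u = 0
    · exact ⟨u, huβ, hu0, Or.inr (by
        have := eq_neg_of_add_eq_zero_right hw
        exact this)⟩
    · refine ⟨u + α u, ?_, hw, Or.inl ?_⟩
      · rw [map_add, (huβ : β u = -u), hαneg u huβ]; abel
      · rw [map_add, hα2]; abel
  have hβvmul : ∀ y : ℓ, β (mul v (ι y)) = -(mul v (ι y)) := fun y => by
    rw [hβm, hvβ, hβι, map_neg, LinearMap.neg_apply]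
  have hmulvinj : ∀ a b : A, mul v a = mul v b → a = b := fun a b h =>
    (hdiv v hv0).1.injective h
  have hcan : ∀ a b : ℓ, mul v (ι a) = mul v (ι b) → a = b := fun a b h =>
    hinj (hmulvinj _ _ h)
  -- surjectivity onto Eneg
  have hEnegmem : ∀ a : A, β a = -a → ∃ z : ℓ, mul v (ι z) = a := by
    set Lv' : ℓ →ₗ[k] Eneg :=
      LinearMap.codRestrict Eneg ((mul v).comp ι) (fun y => hβvmul y) with hLv'def
    have hLv'inj : Injective Lv' := by
      intro a b h
      exact hcan a b (congrArg Subtype.val h)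
    have hLv'surj : Surjective Lv' :=
      (LinearMap.injective_iff_surjective_of_finrank_eq_finrank
        (by rw [hquad, hEnegrank])).mp hLv'inj
    intro a ha
    obtain ⟨z, hz⟩ := hLv'surj ⟨a, ha⟩
    exact ⟨z, congrArg Subtype.val hz⟩
  -- decomposition
  have hdecomp : ∀ a : A, ∃ s z : ℓ, a = ι s + mul v (ι z) := fun a => by
    obtain ⟨s, hs⟩ := hfixmem ((2 : k)⁻¹ • (a + β a))
      (by rw [map_smul, map_add, hβ2, add_comm])
    obtain ⟨z, hz⟩ := hEnegmem ((2 : k)⁻¹ • (a - β a))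
      (by rw [map_smul, map_sub, hβ2, ← smul_neg, neg_sub])
    refine ⟨s, z, ?_⟩
    rw [hs, hz, ← smul_add]
    have h : (a + β a) + (a - β a) = (2 : k) • a := by rw [two_smul]; abel
    rw [h, smul_smul, inv_mul_cancel₀ hchar, one_smul]
  -- α acts as σ on ℓ
  have hαι : ∀ x : ℓ, α (ι x) = ι (σ x) := by
    by_cases hid : ∀ x : ℓ, α (ι x) = ι x
    · exfalso
      rcases hvα with hv1 | hv1
      · apply hαne
        apply LinearEquiv.ext
        intro a
        obtain ⟨s, z, hsz⟩ := hdecomp a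
        rw [LinearEquiv.refl_apply, hsz, map_add, hid s, hαm, hv1, hid z]
      · apply hαβne
        apply LinearEquiv.ext
        intro a
        obtain ⟨s, z, hsz⟩ := hdecomp a
        rw [hsz, map_add, map_add, hid s, hβι, hαm, hv1, hid z, hβvmul,
          map_neg mul v, LinearMap.neg_apply]
    · push_neg at hid
      obtain ⟨x₀, hx₀⟩ := hid
      have hαfix : ∀ x : ℓ, ∃ y : ℓ, ι y = α (ι x) := fun x =>
        hfixmem _ (by rw [← hαβ, hβι])
      choose τ hτ using hαfix
      have hτadd : ∀ x y : ℓ, τ (x + y) = τ x + τ y := fun x y =>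
        hinj (by rw [hτ (x + y), map_add ι x y, map_add α, ← hτ x, ← hτ y, ← map_add ι])
      have hτsmul : ∀ (c : k) (x : ℓ), τ (c • x) = c • τ x := fun c x =>
        hinj (by rw [hτ (c • x), map_smul ι c x, map_smul α, ← hτ x, ← map_smul ι])
      set T : ℓ →ₗ[k] ℓ :=
        { toFun := τ, map_add' := hτadd,
          map_smul' := fun c x => hτsmul c x } with hTdef
      have hTτ : ∀ x, T x = τ x := fun _ => rfl
      have hTmul : ∀ x y : ℓ, T (x * y) = T x * T y := fun x y => by
        rw [hTτ, hTτ, hTτ]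
        exact hinj (by rw [hτ (x * y), hιmul x y, hαm, ← hτ x, ← hτ y, ← hιmul])
      have hT1 : T 1 = 1 := by
        rw [hTτ]; exact hinj (by rw [hτ 1, hι1, hαone])
      have hTne : ∃ x, T x ≠ x := ⟨x₀, fun h => hx₀ (by rw [← hτ, ← hTτ, h])⟩
      have hTσ := aut_eq_sigma hquad σ hσ T hTmul hT1 hTne
      intro x
      rw [← hτ x, ← hTτ, hTσ x]
  -- σ is an involution
  have hσinv : ∀ w : ℓ, σ (σ w) = w := by
    by_contra hcon
    push_neg at hcon
    obtain ⟨w₀, hw₀⟩ := hcon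
    have h := aut_eq_sigma hquad σ hσ (σ.toLinearMap ∘ₗ σ.toLinearMap)
      (fun x y => by simp [map_mul]) (by simp) ⟨w₀, by simpa using hw₀⟩
    obtain ⟨x, hx⟩ := hσ
    exact hx (σ.injective (by simpa using h x))
  -- the map F
  have hexF : ∀ x : ℓ, ∃ y : ℓ, mul v (ι y) = mul (ι x) v := fun x =>
    hEnegmem _ (by rw [hβm, hβι, hvβ, map_neg])
  choose F hF using hexF
  have hFadd : ∀ x y : ℓ, F (x + y) = F x + F y := fun x y =>
    hcan _ _ (by rw [hF (x + y), map_add ι x y, map_add mul (ι x) (ι y),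
      LinearMap.add_apply, ← hF x, ← hF y, map_add ι (F x) (F y), map_add (mul v)])
  have hFsmul : ∀ (c : k) (x : ℓ), F (c • x) = c • F x := fun c x =>
    hcan _ _ (by rw [hF (c • x), map_smul ι c x, map_smul mul c (ι x),
      LinearMap.smul_apply, ← hF x, map_smul ι c (F x), map_smul (mul v)])
  have hF1 : F 1 = 1 :=
    hcan _ _ (by rw [hF 1, hι1, (hone v).1, (hone v).2])
  have hFσ : ∀ x : ℓ, F (σ x) = σ (F x) := by
    intro x
    apply hcan
    rw [hF (σ x)]
    have h := congrArg α (hF x)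
    rw [hαm, hαm, hαι, hαι] at h
    rcases hvα with hv1 | hv1
    · rw [hv1] at h; exact h.symm
    · rw [hv1, map_neg mul v, LinearMap.neg_apply,
        map_neg (mul (ι (σ x))) v] at h
      exact (neg_injective h).symm
  have hFinj : ∀ x : ℓ, F x = 0 → x = 0 := by
    intro x hFx
    have h0 : mul (ι x) v = 0 := by
      rw [← hF x, hFx, map_zero, map_zero]
    have h1 : ι x = 0 := by
      apply (hdiv v hv0).2.injective (a₂ := 0)
      show mul (ι x) v = mul 0 v
      rw [h0, map_zero, LinearMap.zero_apply]
    exact hinj (by rw [h1, map_zero])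
  -- the map H
  have hexH : ∀ y : ℓ, ∃ z : ℓ, ι z = mul (mul v (ι y)) v := fun y =>
    hfixmem _ (by rw [hβm, hβvmul, hvβ, map_neg mul (mul v (ι y)),
      LinearMap.neg_apply, map_neg (mul (mul v (ι y))) v, neg_neg])
  choose H hH using hexH
  have hHadd : ∀ y z : ℓ, H (y + z) = H y + H z := fun y z =>
    hinj (by rw [hH (y + z), map_add ι y z, map_add (mul v),
      map_add mul (mul v (ι y)) (mul v (ι z)), LinearMap.add_apply,
      map_add ι (H y) (H z), hH y, hH z])
  have hHsmul : ∀ (c : k) (y : ℓ), H (c • y) = c • H y := fun c y =>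
    hinj (by rw [hH (c • y), map_smul ι c y, map_smul (mul v),
      map_smul mul c (mul v (ι y)), LinearMap.smul_apply,
      map_smul ι c (H y), hH y])
  have hHσ : ∀ y : ℓ, H (σ y) = σ (H y) := by
    intro y
    apply hinj
    rw [hH (σ y), ← hαι (H y), hH y, hαm, hαm, hαι]
    rcases hvα with hv1 | hv1
    · rw [hv1]
    · rw [hv1, map_neg mul v, LinearMap.neg_apply,
        map_neg mul (mul v (ι (σ y))), LinearMap.neg_apply,
        map_neg (mul (mul v (ι (σ y)))) v, neg_neg]
  -- linear forms for F and H
  set TF : ℓ →ₗ[k] ℓ :=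
    { toFun := F, map_add' := hFadd, map_smul' := fun c x => hFsmul c x } with hTFdef
  set TH : ℓ →ₗ[k] ℓ :=
    { toFun := H, map_add' := hHadd, map_smul' := fun c y => hHsmul c y } with hTHdef
  obtain ⟨aF, c₁, hFform'⟩ := comm_sigma_form hquad σ hσ hσinv TF (fun w => hFσ w)
  obtain ⟨c₂, c₃, hHform'⟩ := comm_sigma_form hquad σ hσ hσinv TH (fun w => hHσ w)
  have hFform : ∀ w : ℓ, F w = algebraMap k ℓ aF * w + algebraMap k ℓ c₁ * σ w :=
    fun w => hFform' w
  have hHform : ∀ w : ℓ, H w = algebraMap k ℓ c₂ * w + algebraMap k ℓ c₃ * σ w :=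
    fun w => hHform' w
  have haF : algebraMap k ℓ aF = 1 - algebraMap k ℓ c₁ := by
    have h := hFform 1
    rw [hF1, map_one, mul_one, mul_one] at h
    linear_combination -h
  have hFx : ∀ x : ℓ, F x = (1 - algebraMap k ℓ c₁) * x + algebraMap k ℓ c₁ * σ x :=
    fun x => by rw [hFform x, haF]
  -- the isomorphism Φ
  set Φ : ℓ × ℓ →ₗ[k] A :=
    ι ∘ₗ LinearMap.fst k ℓ ℓ + ((mul v) ∘ₗ ι) ∘ₗ LinearMap.snd k ℓ ℓ with hΦdef
  have hΦap : ∀ p : ℓ × ℓ, Φ p = ι p.1 + mul v (ι p.2) := fun p => rfl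
  have hΦ0 : ∀ p : ℓ × ℓ, Φ p = 0 → p = 0 := by
    intro p hp
    have hp' : ι p.1 + mul v (ι p.2) = 0 := by rw [← hΦap]; exact hp
    have hb : ι p.1 - mul v (ι p.2) = 0 := by
      have h := congrArg β hp'
      rw [map_add, hβι, hβvmul, map_zero] at h
      rw [sub_eq_add_neg]; exact h
    have h1 : ι p.1 + ι p.1 = 0 := by
      have hsum : (ι p.1 + mul v (ι p.2)) + (ι p.1 - mul v (ι p.2))
          = ι p.1 + ι p.1 := by abel
      rw [hp', hb, add_zero] at hsum
      exact hsum.symm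
    have hp1 : p.1 = 0 := hinj (by rw [map_zero]; exact h2smul _ h1)
    have hp2 : p.2 = 0 := by
      have hmz : mul v (ι p.2) = 0 := by
        rw [hp1, map_zero, zero_add] at hp'; exact hp'
      exact hcan _ _ (by rw [hmz, map_zero, map_zero])
    exact Prod.ext hp1 hp2
  have hΦinj : Injective Φ := LinearMap.ker_eq_bot.mp (LinearMap.ker_eq_bot'.mpr hΦ0)
  have hΦsurj : Surjective Φ := fun a => by
    obtain ⟨s, z, h⟩ := hdecomp a
    exact ⟨(s, z), by rw [hΦap]; exact h.symm⟩
  -- multiplicativity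
  have hmulΦ : ∀ p q : ℓ × ℓ,
      Φ (Amul σ (c₁, c₂, c₃) p q) = mul (Φ p) (Φ q) := by
    intro p q
    obtain ⟨x, y⟩ := p; obtain ⟨w, z⟩ := q
    have hterm2 : mul (ι x) (mul v (ι z)) = mul v (ι (F x * z)) := by
      rw [← hnrt z (ι x) v, ← hF x, hnrt z v (ι (F x)), ← hιmul]
    have hterm3 : mul (mul v (ι y)) (ι w) = mul v (ι (y * w)) := by
      rw [hnrt w v (ι y), ← hιmul]
    have hterm4 : mul (mul v (ι y)) (mul v (ι z)) = ι (H y * z) := by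
      rw [← hnrt z (mul v (ι y)) v, ← hH y, ← hιmul]
    have hexp : mul (ι x + mul v (ι y)) (ι w + mul v (ι z))
        = ι (x * w + H y * z) + mul v (ι (y * w + F x * z)) := by
      rw [map_add mul (ι x) (mul v (ι y)), LinearMap.add_apply,
        map_add (mul (ι x)), map_add (mul (mul v (ι y)))]
      rw [← hιmul x w, hterm2, hterm3, hterm4]
      rw [map_add ι (x * w) (H y * z), map_add ι (y * w) (F x * z), map_add (mul v)]
      abel
    rw [hΦap, hΦap, hΦap, hexp]
    simp only [Amul]
    rw [← hHform y, ← hFx x]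
  -- assemble
  refine ⟨(c₁, c₂, c₃), ?_, ⇑Φ, ⟨hΦinj, hΦsurj⟩, fun p q => map_add Φ p q,
    fun t p => map_smul Φ t p, hmulΦ⟩
  intro x y hq
  have hqc : F x * x - H y * y = 0 := by
    rw [hFx x, hHform y]
    simp only [qc] at hq
    linear_combination hq
  by_cases hy : y = 0
  · subst hy
    refine ⟨?_, rfl⟩
    have h : F x * x = 0 := by linear_combination hqc
    rcases mul_eq_zero.mp h with h' | h'
    · exact hFinj x h'
    · exact h'
  · exfalso
    have hAz : Amul σ (c₁, c₂, c₃) (x, y) (F x, -y) = 0 := by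
      have h1 : x * F x + (algebraMap k ℓ c₂ * y + algebraMap k ℓ c₃ * σ y) * -y = 0 := by
        rw [← hHform y]; linear_combination hqc
      have h2 : y * F x + ((1 - algebraMap k ℓ c₁) * x + algebraMap k ℓ c₁ * σ x) * -y = 0 := by
        rw [← hFx x]; ring
      simp only [Amul]
      exact Prod.ext (by simpa using h1) (by simpa using h2)
    have hΦxy0 : Φ (x, y) ≠ 0 := fun h => hy (congrArg Prod.snd (hΦ0 _ h))
    have hz : mul (Φ (x, y)) (Φ (F x, -y)) = 0 := by
      rw [← hmulΦ, hAz, map_zero]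
    have hz2 : Φ (F x, -y) = 0 := by
      apply (hdiv _ hΦxy0).1.injective (a₂ := 0)
      show mul (Φ (x, y)) (Φ (F x, -y)) = mul (Φ (x, y)) 0
      rw [hz, map_zero]
    exact hy (neg_eq_zero.mp (congrArg Prod.snd (hΦ0 _ hz2)))
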